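/- Let t > 0, d ≥ 1 and q' ∈ [1, ∞). Then sup_{j ≥ 0} ( ∑_{k ∈ ℕ_0^d, |k|_∞ ∈ {j−1,j,j+1}} 2^{t(j − |k|_1) q'} )^{1/q'} < ∞, where |k|_1 = k_1 + ⋯ + k_d and |k|_∞ = max_i k_i. -/

import Mathlib

theorem stmt_4 (d : ℕ) (hd : 1 ≤ d) (t : ℝ) (ht : 0 < t) (q' : ℝ) (hq' : 1 ≤ q') :
    ∃ C : ℝ, ∀ j : ℕ,
      ((∑ k ∈ (Fintype.piFinset fun _ : Fin d => Finset.range (j + 2)).filter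
            (fun k => Finset.univ.sup k = j - 1 ∨ Finset.univ.sup k = j ∨
              Finset.univ.sup k = j + 1),
          (2 : ℝ) ^ (t * ((j : ℝ) - ∑ i, (k i : ℝ)) * q')) ^ (1 / q')) ≤ C := by
  have hq0 : (0:ℝ) < q' := lt_of_lt_of_le one_pos hq'
  have htq : 0 < t * q' := mul_pos ht hq0
  set r : ℝ := (2:ℝ) ^ (-(t*q')) with hrdef
  have hr0 : 0 < r := Real.rpow_pos_of_pos two_pos _
  have hr1 : r < 1 := Real.rpow_lt_one_of_one_lt_of_neg one_lt_two (by linarith)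
  have h1r : (0:ℝ) < 1 - r := by linarith
  have hinv1 : (1:ℝ) ≤ (1-r)⁻¹ := by
    rw [le_inv_comm₀ one_pos h1r]; linarith
  -- geometric sum bound
  have hgeom : ∀ n : ℕ, ∑ a ∈ Finset.range n, r ^ a ≤ (1-r)⁻¹ := by
    intro n
    rw [geom_sum_eq hr1.ne, div_le_iff_of_neg (by linarith : r - 1 < 0)]
    have h : (1-r)⁻¹ * (r-1) = -1 := by field_simp; ring
    rw [h]
    have := pow_nonneg hr0.le n
    linarith
  -- exponent identity
  have hA : ∀ n : ℕ, (2:ℝ) ^ (-(t*q') * (n:ℝ)) = r ^ n := by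
    intro n
    rw [← Real.rpow_natCast r n, ← Real.rpow_mul (by norm_num : (0:ℝ) ≤ 2)]
  have hinvA : ∀ n : ℕ, (2:ℝ) ^ ((t*q') * (n:ℝ)) = (r⁻¹) ^ n := by
    intro n
    rw [inv_pow, ← hA n, ← Real.rpow_neg (by norm_num : (0:ℝ) ≤ 2)]
    ring_nf
  set C0 : ℝ := r⁻¹ * (3 * d * ((1-r)⁻¹)^d) with hC0
  refine ⟨max 1 C0, fun j => ?_⟩
  set F := (Fintype.piFinset fun _ : Fin d => Finset.range (j + 2)).filter
      (fun k => Finset.univ.sup k = j - 1 ∨ Finset.univ.sup k = j ∨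
        Finset.univ.sup k = j + 1) with hF
  set P := Fintype.piFinset fun _ : Fin d => Finset.range (j + 2) with hP
  set S := ∑ k ∈ F, (2 : ℝ) ^ (t * ((j : ℝ) - ∑ i, (k i : ℝ)) * q') with hS
  have hS0 : 0 ≤ S := Finset.sum_nonneg fun k _ => (Real.rpow_pos_of_pos two_pos _).le
  -- termwise rewrite
  have hterm : ∀ k : Fin d → ℕ,
      (2 : ℝ) ^ (t * ((j : ℝ) - ∑ i, (k i : ℝ)) * q')
        = (2:ℝ) ^ (t*q'*(j:ℝ)) * ∏ i, r ^ (k i) := by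
    intro k
    have hsum : ∑ i, (k i : ℝ) = ((∑ i, k i : ℕ) : ℝ) := by push_cast; ring
    have hexp : t * ((j : ℝ) - ∑ i, (k i : ℝ)) * q'
        = t*q'*(j:ℝ) + (-(t*q') * ((∑ i, k i : ℕ) : ℝ)) := by
      rw [hsum] at *; ring
    rw [hexp, Real.rpow_add two_pos, hA, Finset.prod_pow_eq_pow_sum]
  have hSeq : S = (2:ℝ) ^ (t*q'*(j:ℝ)) * ∑ k ∈ F, ∏ i, r ^ (k i) := by
    rw [hS, Finset.mul_sum]
    exact Finset.sum_congr rfl fun k _ => hterm k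
  -- the indicator function
  set h : Fin d → Fin d → ℕ → ℝ :=
    fun i0 i a => if i = i0 then (if j - 1 ≤ a then r^a else 0) else r^a with hh
  have hhnonneg : ∀ i0 i a, 0 ≤ h i0 i a := by
    intro i0 i a
    simp only [hh]
    split <;> [skip; positivity]
    split <;> positivity
  -- step: pointwise bound by sum over i0
  have hstep1 : ∀ k ∈ F, ∏ i, r ^ (k i) ≤ ∑ i0, ∏ i, h i0 i (k i) := by
    intro k hk
    rw [hF, Finset.mem_filter] at hk
    obtain ⟨hkP, hksup⟩ := hk
    have hne : (Finset.univ : Finset (Fin d)).Nonempty := by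
      have : Nonempty (Fin d) := Fin.pos_iff_nonempty.mp hd
      exact Finset.univ_nonempty
    obtain ⟨i0, -, hi0⟩ := Finset.exists_mem_eq_sup Finset.univ hne k
    have hki0 : j - 1 ≤ k i0 := by
      rcases hksup with h1 | h1 | h1 <;> rw [hi0] at h1 <;> omega
    have heq : ∏ i, h i0 i (k i) = ∏ i, r ^ (k i) := by
      apply Finset.prod_congr rfl
      intro i _
      simp only [hh]
      by_cases hii : i = i0
      · subst hii; simp [hki0]
      · simp [hii]
    refine le_trans (le_of_eq heq.symm) ?_
    exact Finset.single_le_sum (fun i0' _ => Finset.prod_nonneg fun i _ => hhnonneg i0' i (k i))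
      (Finset.mem_univ i0)
  have hstep2 : ∑ k ∈ F, ∏ i, r ^ (k i) ≤ ∑ i0, ∏ i, ∑ a ∈ Finset.range (j+2), h i0 i a := by
    calc ∑ k ∈ F, ∏ i, r ^ (k i) ≤ ∑ k ∈ F, ∑ i0, ∏ i, h i0 i (k i) :=
          Finset.sum_le_sum hstep1
      _ ≤ ∑ k ∈ P, ∑ i0, ∏ i, h i0 i (k i) := by
          apply Finset.sum_le_sum_of_subset_of_nonneg (Finset.filter_subset _ _)
          intro k _ _
          exact Finset.sum_nonneg fun i0 _ =>
            Finset.prod_nonneg fun i _ => hhnonneg i0 i (k i)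
      _ = ∑ i0, ∑ k ∈ P, ∏ i, h i0 i (k i) := Finset.sum_comm
      _ = ∑ i0, ∏ i, ∑ a ∈ Finset.range (j+2), h i0 i a := by
          refine Finset.sum_congr rfl fun i0 _ => ?_
          rw [Finset.prod_univ_sum]
  -- bound each factor product
  have hfac : ∀ i0 : Fin d, ∏ i, ∑ a ∈ Finset.range (j+2), h i0 i a
      ≤ (3 * r^(j-1)) * ((1-r)⁻¹)^(d-1) := by
    intro i0
    have hfi0 : ∑ a ∈ Finset.range (j+2), h i0 i0 a ≤ 3 * r^(j-1) := by
      simp only [hh, if_pos rfl]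
      rw [Finset.sum_ite, Finset.sum_const_zero, add_zero]
      have hcard : ((Finset.range (j+2)).filter (fun a => j - 1 ≤ a)).card ≤ 3 := by
        have hsub : (Finset.range (j+2)).filter (fun a => j - 1 ≤ a) ⊆
            Finset.Ico (j-1) (j+2) := by
          intro a ha
          rw [Finset.mem_filter, Finset.mem_range] at ha
          rw [Finset.mem_Ico]
          omega
        calc _ ≤ (Finset.Ico (j-1) (j+2)).card := Finset.card_le_card hsub
          _ ≤ 3 := by rw [Nat.card_Ico]; omega
      calc ∑ a ∈ (Finset.range (j+2)).filter (fun a => j - 1 ≤ a), r^a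
          ≤ ∑ _a ∈ (Finset.range (j+2)).filter (fun a => j - 1 ≤ a), r^(j-1) := by
            apply Finset.sum_le_sum
            intro a ha
            rw [Finset.mem_filter] at ha
            exact pow_le_pow_of_le_one hr0.le hr1.le ha.2
        _ = ((Finset.range (j+2)).filter (fun a => j - 1 ≤ a)).card * r^(j-1) := by
            rw [Finset.sum_const, nsmul_eq_mul]
        _ ≤ 3 * r^(j-1) := by
            apply mul_le_mul_of_nonneg_right _ (pow_nonneg hr0.le _)
            exact_mod_cast hcard
    have hfother : ∀ i, i ≠ i0 → ∑ a ∈ Finset.range (j+2), h i0 i a ≤ (1-r)⁻¹ := by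
      intro i hi
      simp only [hh, if_neg hi]
      exact hgeom _
    have hfnonneg : ∀ i, 0 ≤ ∑ a ∈ Finset.range (j+2), h i0 i a :=
      fun i => Finset.sum_nonneg fun a _ => hhnonneg i0 i a
    rw [← Finset.mul_prod_erase Finset.univ _ (Finset.mem_univ i0)]
    have hprodrest : ∏ i ∈ Finset.univ.erase i0, ∑ a ∈ Finset.range (j+2), h i0 i a
        ≤ ((1-r)⁻¹)^(d-1) := by
      calc ∏ i ∈ Finset.univ.erase i0, ∑ a ∈ Finset.range (j+2), h i0 i a
          ≤ ∏ _i ∈ Finset.univ.erase i0, (1-r)⁻¹ := by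
            apply Finset.prod_le_prod (fun i _ => hfnonneg i)
            intro i hi
            exact hfother i (Finset.ne_of_mem_erase hi)
        _ = ((1-r)⁻¹)^(d-1) := by
            rw [Finset.prod_const, Finset.card_erase_of_mem (Finset.mem_univ i0)]
            simp
    exact mul_le_mul hfi0 hprodrest (Finset.prod_nonneg fun i _ => hfnonneg i)
      (by positivity)
  -- combine
  have hSbound : S ≤ (2:ℝ)^(t*q'*(j:ℝ)) * (d * ((3 * r^(j-1)) * ((1-r)⁻¹)^(d-1))) := by
    rw [hSeq]
    apply mul_le_mul_of_nonneg_left _ (Real.rpow_pos_of_pos two_pos _).le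
    calc ∑ k ∈ F, ∏ i, r ^ (k i)
        ≤ ∑ i0, ∏ i, ∑ a ∈ Finset.range (j+2), h i0 i a := hstep2
      _ ≤ ∑ _i0 : Fin d, (3 * r^(j-1)) * ((1-r)⁻¹)^(d-1) := Finset.sum_le_sum fun i0 _ => hfac i0
      _ = d * ((3 * r^(j-1)) * ((1-r)⁻¹)^(d-1)) := by
          rw [Finset.sum_const, nsmul_eq_mul, Finset.card_univ, Fintype.card_fin]
  have hkey : (2:ℝ)^(t*q'*(j:ℝ)) * r^(j-1) ≤ r⁻¹ := by
    rw [hinvA j]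
    rcases Nat.eq_zero_or_pos j with hj | hj
    · subst hj
      simp only [pow_zero, Nat.zero_sub, one_mul]
      rw [le_inv_comm₀ one_pos hr0]
      simpa using hr1.le
    · obtain ⟨m, rfl⟩ := Nat.exists_eq_add_of_le hj
      have : (r⁻¹)^(1+m) * r^(1+m-1) = r⁻¹ := by
        have hm : 1 + m - 1 = m := by omega
        rw [hm, pow_add, pow_one]
        rw [mul_assoc, mul_comm (r⁻¹^m), ← mul_assoc, mul_assoc]
        rw [← mul_pow, mul_inv_cancel₀ hr0.ne', one_pow, mul_one]
      rw [this]
  have hSC0 : S ≤ C0 := by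
    have h1 : (2:ℝ)^(t*q'*(j:ℝ)) * (d * ((3 * r^(j-1)) * ((1-r)⁻¹)^(d-1)))
        = ((2:ℝ)^(t*q'*(j:ℝ)) * r^(j-1)) * (3 * d * ((1-r)⁻¹)^(d-1)) := by ring
    have h2 : ((2:ℝ)^(t*q'*(j:ℝ)) * r^(j-1)) * (3 * d * ((1-r)⁻¹)^(d-1))
        ≤ r⁻¹ * (3 * d * ((1-r)⁻¹)^(d-1)) := by
      apply mul_le_mul_of_nonneg_right hkey
      positivity
    have h3 : ((1-r)⁻¹)^(d-1) ≤ ((1-r)⁻¹)^d :=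
      pow_le_pow_right₀ hinv1 (Nat.sub_le d 1)
    have h4 : r⁻¹ * (3 * d * ((1-r)⁻¹)^(d-1)) ≤ C0 := by
      rw [hC0]
      apply mul_le_mul_of_nonneg_left _ (by positivity)
      apply mul_le_mul_of_nonneg_left h3 (by positivity)
    calc S ≤ _ := hSbound
      _ = _ := h1
      _ ≤ _ := h2
      _ ≤ C0 := h4
  -- final rpow step
  have hSmax : S ≤ max 1 C0 := le_trans hSC0 (le_max_right _ _)
  calc S ^ (1/q') ≤ (max 1 C0) ^ (1/q') :=
        Real.rpow_le_rpow hS0 hSmax (by positivity)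
    _ ≤ (max 1 C0) ^ (1:ℝ) := by
        apply Real.rpow_le_rpow_of_exponent_le (le_max_left _ _)
        rw [div_le_one hq0]; exact hq'
    _ = max 1 C0 := Real.rpow_one _
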